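/- For every positive integer m, the real number S(m) = Σ_{k=0}^{3m−1} (−1)^k · 2^(k/3) satisfies S(m)^3 = (1 − (−2)^m)^3 · (2^(1/3) − 1) / 3. (This is the cube of the finite geometric-series identity ((1/27)·(1 − (−2)^m)^3·(2^(1/3) − 1))^(1/3) = Σ_{k=0}^{3m−1} (−2)^(k/3)/9^(1/3), generalizing Ramanujan's identity, which is the case m = 1.) -/

import Mathlib

theorem geometric_series_cube (m : ℕ) (hm : 0 < m) :
    (∑ k ∈ Finset.range (3 * m), (-1 : ℝ) ^ k * (2:ℝ) ^ ((k : ℝ) / 3)) ^ 3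
      = (1 - (-2 : ℝ) ^ m) ^ 3 * ((2:ℝ) ^ ((1:ℝ)/3) - 1) / 3 := by
  set a : ℝ := (2:ℝ) ^ ((1:ℝ)/3) with ha
  have ha0 : (0:ℝ) < a := Real.rpow_pos_of_pos (by norm_num) _
  have ha3 : a ^ 3 = 2 := by
    rw [ha, ← Real.rpow_natCast ((2:ℝ) ^ ((1:ℝ)/3)) 3, ← Real.rpow_mul (by norm_num)]
    norm_num
  have hterm : ∀ k : ℕ, (-1 : ℝ) ^ k * (2:ℝ) ^ ((k : ℝ) / 3) = (-a) ^ k := by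
    intro k
    have : (2:ℝ) ^ ((k : ℝ) / 3) = a ^ k := by
      rw [ha, ← Real.rpow_natCast ((2:ℝ) ^ ((1:ℝ)/3)) k, ← Real.rpow_mul (by norm_num)]
      ring_nf
    rw [this, neg_pow]; ring
  have hne : (-a : ℝ) ≠ 1 := by nlinarith
  have hsum : ∑ k ∈ Finset.range (3 * m), (-1 : ℝ) ^ k * (2:ℝ) ^ ((k : ℝ) / 3)
      = ((-a) ^ (3 * m) - 1) / (-a - 1) := by
    rw [Finset.sum_congr rfl fun k _ => hterm k, geom_sum_eq hne]
  have hpow : (-a : ℝ) ^ (3 * m) = (-2 : ℝ) ^ m := by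
    rw [pow_mul]
    congr 1
    rw [neg_pow, ha3]; ring
  rw [hsum, hpow]
  have hden : (-a - 1 : ℝ) ≠ 0 := by nlinarith
  field_simp
  have key : (a - 1) * (a + 1) ^ 3 = 3 := by linear_combination (a + 2) * ha3
  linear_combination (1 - (-2:ℝ)^m)^3 * key
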